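/- Let β = (π_ℓ)_{ℓ=1}^L be a chainable architecture of depth L ≥ 2. Then for every s ∈ {1, …, L−1}, B^β ⊆ B^{β_s}. Consequently, for every matrix A of the appropriate size, E^β(A) ≥ max_{1 ≤ s ≤ L−1} E^{β_s}(A). -/

import Mathlib

/-- A *pattern* is a tuple `(a, b, c, d)` of (positive) natural numbers. -/
structure Pattern where
  a : ℕ
  b : ℕ
  c : ℕ
  d : ℕ

namespace Pattern

/-- The entries of a pattern are positive integers. -/
def Pos (π : Pattern) : Prop := 0 < π.a ∧ 0 < π.b ∧ 0 < π.c ∧ 0 < π.d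

/-- Number of rows `a*b*d` of a `π`-factor. -/
def rows (π : Pattern) : ℕ := π.a * π.b * π.d

/-- Number of columns `a*c*d` of a `π`-factor. -/
def cols (π : Pattern) : ℕ := π.a * π.c * π.d

/-- `r(π₁, π₂) = a₁c₁/a₂ (= b₂d₂/d₁)`. -/
def rk (π₁ π₂ : Pattern) : ℕ := π₁.a * π₁.c / π₂.a

/-- A pair of patterns is *chainable* if `a₁c₁/a₂ = b₂d₂/d₁` is a positive integer,
`a₁ ∣ a₂` and `d₂ ∣ d₁`. -/
def Chainable (π₁ π₂ : Pattern) : Prop :=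
  π₂.a ∣ π₁.a * π₁.c ∧ π₁.d ∣ π₂.b * π₂.d ∧
    π₁.a * π₁.c / π₂.a = π₂.b * π₂.d / π₁.d ∧
    0 < π₁.a * π₁.c / π₂.a ∧ π₁.a ∣ π₂.a ∧ π₂.d ∣ π₁.d

/-- `π₁ * π₂ := (a₁, b₁d₁/d₂, a₂c₂/a₁, d₂)`. -/
instance : Mul Pattern :=
  ⟨fun π₁ π₂ => ⟨π₁.a, π₁.b * π₁.d / π₂.d, π₂.a * π₂.c / π₁.a, π₂.d⟩⟩

/-- `‖π‖₀ := a*b*c*d`. -/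
def norm0 (π : Pattern) : ℕ := π.a * π.b * π.c * π.d

end Pattern

open scoped Kronecker

/-- The flattening equivalence `(Fin a × Fin b) × Fin d ≃ Fin (a*b*d)`. -/
def kron3Equiv (a b d : ℕ) : (Fin a × Fin b) × Fin d ≃ Fin (a * b * d) :=
  (finProdFinEquiv.prodCongr (Equiv.refl (Fin d))).trans finProdFinEquiv

/-- The support matrix `S_π = I_a ⊗ 1_{b×c} ⊗ I_d ∈ {0,1}^{abd × acd}`. -/
def Pattern.S (π : Pattern) : Matrix (Fin π.rows) (Fin π.cols) ℕ :=
  Matrix.reindex (kron3Equiv π.a π.b π.d) (kron3Equiv π.a π.c π.d)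
    ((1 : Matrix (Fin π.a) (Fin π.a) ℕ) ⊗ₖ
      (Matrix.of fun _ _ => (1 : ℕ) : Matrix (Fin π.b) (Fin π.c) ℕ) ⊗ₖ
      (1 : Matrix (Fin π.d) (Fin π.d) ℕ))

/-- The support matrix `S_π`, extended by zero to an `ℕ × ℕ`-indexed array. -/
def SpatN (π : Pattern) : ℕ → ℕ → ℕ := fun i j =>
  if h : i < π.rows ∧ j < π.cols then π.S ⟨i, h.1⟩ ⟨j, h.2⟩ else 0

/-- `X` is (the extension by zero of) a `π`-factor: it vanishes outside the support of `S_π`. -/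
def IsFactorN (π : Pattern) (X : ℕ → ℕ → ℂ) : Prop :=
  ∀ i j, SpatN π i j = 0 → X i j = 0

/-- Product of matrices encoded as finitely supported `ℕ × ℕ`-indexed arrays. -/
noncomputable def nmul (f g : ℕ → ℕ → ℂ) : ℕ → ℕ → ℂ := fun i j => ∑' k, f i k * g k j

/-- `nprod X k = X 0 * X 1 * ⋯ * X k`. -/
noncomputable def nprod (X : ℕ → ℕ → ℕ → ℂ) : ℕ → ℕ → ℕ → ℂ
  | 0 => X 0
  | k + 1 => nmul (nprod X k) (X (k + 1))

/-- Frobenius norm. -/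
noncomputable def nfrob (f : ℕ → ℕ → ℂ) : ℝ := Real.sqrt (∑' i, ∑' j, ‖f i j‖ ^ 2)

/-- `A` is (the extension by zero of) a matrix of size `m × n`. -/
def SuppIn (m n : ℕ) (A : ℕ → ℕ → ℂ) : Prop := ∀ i j, A i j ≠ 0 → i < m ∧ j < n

/-- The set `B^β` of butterfly matrices for the architecture `β = (π 0, …, π (L-1))`. -/
def Bset (π : ℕ → Pattern) (L : ℕ) : Set (ℕ → ℕ → ℂ) :=
  { M | ∃ X : ℕ → ℕ → ℕ → ℂ, (∀ ℓ < L, IsFactorN (π ℓ) (X ℓ)) ∧ M = nprod X (L - 1) }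

/-- The approximation error `E^β(A) = inf_{B ∈ B^β} ‖A - B‖_F`. -/
noncomputable def Eerr (π : ℕ → Pattern) (L : ℕ) (A : ℕ → ℕ → ℂ) : ℝ :=
  sInf { e : ℝ | ∃ B ∈ Bset π L, e = nfrob (A - B) }

/-- Partial products of patterns: `pprod π q k = π q * π (q+1) * ⋯ * π (q+k)`. -/
def pprod (π : ℕ → Pattern) (q : ℕ) : ℕ → Pattern
  | 0 => π q
  | k + 1 => pprod π q k * π (q + k + 1)

/-- The two-pattern architecture `(p, q)`. -/
def pairArch (p q : Pattern) : ℕ → Pattern := fun ℓ => if ℓ = 0 then p else q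

/-- The error `E^{β_s}(A)` of the split architecture
`β_s = (π 1 * ⋯ * π s, π (s+1) * ⋯ * π L)` (here `s` counts the factors in the left part). -/
noncomputable def Esplit (π : ℕ → Pattern) (L s : ℕ) (A : ℕ → ℕ → ℂ) : ℝ :=
  Eerr (pairArch (pprod π 0 (s - 1)) (pprod π s (L - 1 - s))) 2 A

lemma spatN_ne_iff (π : Pattern) (i j : ℕ) :
    SpatN π i j ≠ 0 ↔ (i < π.rows ∧ j < π.cols) ∧
      i / π.d / π.b = j / π.d / π.c ∧ i % π.d = j % π.d := by
  unfold SpatN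
  split
  · rename_i h
    dsimp only [Pattern.rows, Pattern.cols] at h ⊢
    simp only [Pattern.S, Matrix.reindex_apply, kron3Equiv, Equiv.symm_trans_apply,
      Equiv.prodCongr_symm, Equiv.refl_symm, Equiv.prodCongr_apply, Equiv.coe_refl,
      Prod.map, Matrix.kroneckerMap_apply, Matrix.one_apply, Matrix.of_apply]
    rw [Matrix.submatrix_apply]
    simp only [Equiv.symm_trans_apply, Equiv.prodCongr_symm, Equiv.refl_symm,
      Equiv.prodCongr_apply, Equiv.coe_refl, Prod.map, finProdFinEquiv_symm_apply,
      Matrix.kroneckerMap_apply, Matrix.one_apply, Matrix.of_apply, id]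
    simp only [Fin.ext_iff, Fin.coe_divNat, Fin.coe_modNat]
    split_ifs with h1 h2 <;> simp_all
  · rename_i h
    simp only [ne_eq, not_true_eq_false, false_iff, not_and]
    tauto

lemma spatN_outside (π : Pattern) {i j : ℕ} (h : ¬(i < π.rows ∧ j < π.cols)) :
    SpatN π i j = 0 := by
  unfold SpatN; rw [dif_neg h]

lemma isFactorN_suppIn {π : Pattern} {X : ℕ → ℕ → ℂ} (h : IsFactorN π X) :
    SuppIn π.rows π.cols X := by
  intro i j hX
  by_contra hc
  exact hX (h i j (spatN_outside π hc))

lemma suppIn_col_zero {m n : ℕ} {f : ℕ → ℕ → ℂ} (h : SuppIn m n f) {i j : ℕ}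
    (hj : n ≤ j) : f i j = 0 := by
  by_contra hc
  exact absurd (h i j hc).2 (by omega)

lemma nmul_suppIn {f g : ℕ → ℕ → ℂ} {m n p q : ℕ} (hf : SuppIn m n f)
    (hg : SuppIn p q g) : SuppIn m q (nmul f g) := by
  intro i j hx
  by_contra hc
  apply hx
  unfold nmul
  have : ∀ k, f i k * g k j = 0 := by
    intro k
    rcases not_and_or.mp hc with h | h
    · by_cases hf' : f i k = 0
      · rw [hf', zero_mul]
      · exact absurd (hf i k hf').1 h
    · by_cases hg' : g k j = 0
      · rw [hg', mul_zero]
      · exact absurd (hg k j hg').2 h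
  simp [this]

lemma nmul_assoc {f g h : ℕ → ℕ → ℂ} {n p : ℕ}
    (hf : ∀ i k, n ≤ k → f i k = 0) (hg : ∀ k j, p ≤ j → g k j = 0) :
    nmul (nmul f g) h = nmul f (nmul g h) := by
  funext i j
  unfold nmul
  have key1 : ∀ j', (∑' k, (∑' m, f i m * g m k) * h k j')
      = ∑ k ∈ Finset.range p, (∑ m ∈ Finset.range n, f i m * g m k) * h k j' := by
    intro j'
    rw [tsum_eq_sum (s := Finset.range p) ?h0]
    · apply Finset.sum_congr rfl
      intro k _
      congr 1
      exact tsum_eq_sum (fun m hm => by rw [hf i m (by simpa using hm), zero_mul])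
    · intro k hk
      have : (∑' m, f i m * g m k) = 0 := by
        have : ∀ m, f i m * g m k = 0 := fun m => by
          rw [hg m k (by simpa using hk), mul_zero]
        simp [this]
      rw [this, zero_mul]
  have key2 : (∑' m, f i m * (∑' k, g m k * h k j))
      = ∑ m ∈ Finset.range n, f i m * (∑ k ∈ Finset.range p, g m k * h k j) := by
    rw [tsum_eq_sum (s := Finset.range n) (fun m hm => by rw [hf i m (by simpa using hm), zero_mul])]
    apply Finset.sum_congr rfl
    intro m _
    congr 1
    exact tsum_eq_sum (fun k hk => by rw [hg m k (by simpa using hk), zero_mul])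
  rw [key1 j, key2]
  simp only [Finset.sum_mul, Finset.mul_sum, mul_assoc]
  exact Finset.sum_comm

lemma mul_a (π₁ π₂ : Pattern) : (π₁ * π₂).a = π₁.a := rfl
lemma mul_b (π₁ π₂ : Pattern) : (π₁ * π₂).b = π₁.b * π₁.d / π₂.d := rfl
lemma mul_c (π₁ π₂ : Pattern) : (π₁ * π₂).c = π₂.a * π₂.c / π₁.a := rfl
lemma mul_d (π₁ π₂ : Pattern) : (π₁ * π₂).d = π₂.d := rfl

lemma mul_rows {π₁ π₂ : Pattern} (h : π₂.d ∣ π₁.d) : (π₁ * π₂).rows = π₁.rows := by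
  have h2 : π₂.d ∣ π₁.b * π₁.d := h.mul_left _
  show π₁.a * (π₁.b * π₁.d / π₂.d) * π₂.d = π₁.a * π₁.b * π₁.d
  rw [mul_assoc, Nat.div_mul_cancel h2, mul_assoc]

lemma mul_cols {π₁ π₂ : Pattern} (h : π₁.a ∣ π₂.a) : (π₁ * π₂).cols = π₂.cols := by
  have h2 : π₁.a ∣ π₂.a * π₂.c := h.mul_right _
  show π₁.a * (π₂.a * π₂.c / π₁.a) * π₂.d = π₂.a * π₂.c * π₂.d
  rw [Nat.mul_div_cancel' h2]

lemma factor_nmul {π₁ π₂ : Pattern} {X Y : ℕ → ℕ → ℂ} (h1 : π₁.Pos)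
    (hc : Pattern.Chainable π₁ π₂) (hX : IsFactorN π₁ X) (hY : IsFactorN π₂ Y) :
    IsFactorN (π₁ * π₂) (nmul X Y) := by
  obtain ⟨hA, hD, hq, hr, hAd, hDd⟩ := hc
  intro i j hS
  unfold nmul
  have key : ∀ k, X i k * Y k j = 0 := by
    intro k
    by_contra hne
    have hXik : X i k ≠ 0 := fun h => hne (by rw [h, zero_mul])
    have hYkj : Y k j ≠ 0 := fun h => hne (by rw [h, mul_zero])
    have h1' : SpatN π₁ i k ≠ 0 := fun h => hXik (hX i k h)
    have h2' : SpatN π₂ k j ≠ 0 := fun h => hYkj (hY k j h)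
    obtain ⟨⟨hi1, hk1⟩, hb1, hm1⟩ := (spatN_ne_iff π₁ i k).mp h1'
    obtain ⟨⟨hk2, hj2⟩, hb2, hm2⟩ := (spatN_ne_iff π₂ k j).mp h2'
    apply absurd hS
    rw [← ne_eq]
    apply (spatN_ne_iff (π₁ * π₂) i j).mpr
    -- arithmetic setup
    obtain ⟨e, he⟩ := hAd
    set r := π₁.a * π₁.c / π₂.a with hrdef
    have hac : r * π₂.a = π₁.a * π₁.c := Nat.div_mul_cancel hA
    have hbd : r * π₁.d = π₂.b * π₂.d := by
      rw [hq]; exact Nat.div_mul_cancel hD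
    have hc1 : π₁.c = r * e := by
      have : π₁.a * π₁.c = π₁.a * (r * e) := by
        rw [← hac, he]; ring
      exact Nat.eq_of_mul_eq_mul_left h1.1 this
    have hkey : π₁.c * π₁.d = e * (π₂.b * π₂.d) := by
      rw [hc1, ← hbd]; ring
    refine ⟨⟨?_, ?_⟩, ?_, ?_⟩
    · rwa [mul_rows hDd]
    · rwa [mul_cols ⟨e, he⟩]
    · -- block equality
      rw [mul_b, mul_c, mul_d]
      have hdb : π₂.d ∣ π₁.b * π₁.d := hDd.mul_left _
      have l1 : i / π₂.d / (π₁.b * π₁.d / π₂.d) = i / π₁.d / π₁.b := by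
        rw [Nat.div_div_eq_div_mul, Nat.mul_div_cancel' hdb, Nat.div_div_eq_div_mul,
          mul_comm π₁.d π₁.b]
      have l2 : j / π₂.d / (π₂.a * π₂.c / π₁.a) = j / π₂.d / π₂.c / e := by
        rw [he, mul_assoc, Nat.mul_div_cancel_left _ h1.1, Nat.div_div_eq_div_mul,
          Nat.div_div_eq_div_mul, Nat.div_div_eq_div_mul, mul_comm e π₂.c]
      rw [l1, l2, hb1, ← hb2]
      -- k / d₁ / c₁ = k / d₂ / b₂ / e
      rw [Nat.div_div_eq_div_mul, Nat.div_div_eq_div_mul, Nat.div_div_eq_div_mul,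
        mul_comm π₁.d π₁.c, hkey]
      congr 1
      ring
    · rw [mul_d]
      calc i % π₂.d = i % π₁.d % π₂.d := (Nat.mod_mod_of_dvd i hDd).symm
        _ = k % π₁.d % π₂.d := by rw [hm1]
        _ = k % π₂.d := Nat.mod_mod_of_dvd k hDd
        _ = j % π₂.d := hm2
  simp [key]

lemma pprod_inv (π : ℕ → Pattern) (q T : ℕ)
    (hPos : ∀ ℓ ≤ T, (π (q + ℓ)).Pos)
    (hch : ∀ ℓ < T, Pattern.Chainable (π (q + ℓ)) (π (q + ℓ + 1))) :
    ∀ k ≤ T, (pprod π q k).Pos ∧ (pprod π q k).a = (π q).a ∧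
      (pprod π q k).d = (π (q + k)).d ∧
      (pprod π q k).a * (pprod π q k).c = (π (q + k)).a * (π (q + k)).c ∧
      (pprod π q k).b * (pprod π q k).d = (π q).b * (π q).d ∧
      (π q).a ∣ (π (q + k)).a ∧
      (k < T → Pattern.Chainable (pprod π q k) (π (q + k + 1))) := by
  intro k
  induction k with
  | zero =>
    intro _
    refine ⟨hPos 0 (by omega), rfl, rfl, rfl, rfl, dvd_refl _, fun hk => ?_⟩
    exact hch 0 hk
  | succ k IH =>
    intro hk1
    obtain ⟨hP, ha, hd, hac, hbd, hdvd, hchain⟩ := IH (by omega)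
    have hC : Pattern.Chainable (pprod π q k) (π (q + k + 1)) := hchain (by omega)
    obtain ⟨cA, cD, cq, cr, cAd, cDd⟩ := hC
    set P := pprod π q k
    set σ := π (q + k + 1)
    have hσ : σ.Pos := hPos (k + 1) (by omega)
    have hP1 : pprod π q (k + 1) = P * σ := by
      show pprod π q (k + 1) = pprod π q k * π (q + k + 1)
      rfl
    have haσ : P.a ∣ σ.a * σ.c := cAd.mul_right _
    have hdP : σ.d ∣ P.b * P.d := cDd.mul_left _
    have e1 : (P * σ).a = (π q).a := ha
    have e2 : (P * σ).d = σ.d := rfl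
    have e3 : (P * σ).a * (P * σ).c = σ.a * σ.c := by
      rw [mul_a, mul_c]; exact Nat.mul_div_cancel' haσ
    have e4 : (P * σ).b * (P * σ).d = (π q).b * (π q).d := by
      rw [mul_b, mul_d, Nat.div_mul_cancel hdP]; exact hbd
    have e5 : (π q).a ∣ σ.a := by
      rw [← ha]; exact cAd
    have ePos : (P * σ).Pos := by
      refine ⟨hP.1, ?_, ?_, hσ.2.2.2⟩
      · rw [mul_b]
        exact Nat.div_pos (Nat.le_of_dvd (Nat.mul_pos hP.2.1 hP.2.2.2) hdP) hσ.2.2.2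
      · rw [mul_c]
        exact Nat.div_pos (Nat.le_of_dvd (Nat.mul_pos hσ.1 hσ.2.2.1) haσ) hP.1
    rw [hP1]
    have hq1 : q + (k + 1) = q + k + 1 := by omega
    refine ⟨ePos, e1, by rw [hq1]; exact e2, by rw [hq1]; exact e3, e4, by rw [hq1]; exact e5, ?_⟩
    intro hkT
    have hCστ : Pattern.Chainable σ (π (q + k + 1 + 1)) := by
      have := hch (k + 1) (by omega)
      rwa [← hq1]
      -- may need index juggling
    obtain ⟨dA, dD, dq, dr, dAd, dDd⟩ := hCστ
    have hq2 : q + (k + 1) + 1 = q + k + 1 + 1 := by omega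
    rw [hq2]
    refine ⟨by rwa [e3], by rwa [e2], by rw [e3, e2]; exact dq, by rwa [e3], ?_, by rwa [e2]⟩
    exact dvd_trans (e1 ▸ e5) dAd

lemma nprod_factor (π : ℕ → Pattern) (q T : ℕ)
    (hPos : ∀ ℓ ≤ T, (π (q + ℓ)).Pos)
    (hch : ∀ ℓ < T, Pattern.Chainable (π (q + ℓ)) (π (q + ℓ + 1)))
    (X : ℕ → ℕ → ℕ → ℂ) (hX : ∀ ℓ ≤ T, IsFactorN (π (q + ℓ)) (X ℓ)) :
    ∀ k ≤ T, IsFactorN (pprod π q k) (nprod X k) := by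
  intro k
  induction k with
  | zero => intro _; exact hX 0 (by omega)
  | succ k IH =>
    intro hk1
    obtain ⟨hP, _, _, _, _, _, hchain⟩ := pprod_inv π q T hPos hch k (by omega)
    exact factor_nmul hP (hchain (by omega)) (IH (by omega)) (hX (k + 1) hk1)

lemma nprod_split (X : ℕ → ℕ → ℕ → ℂ) (s' T n : ℕ)
    (hf : ∀ i m, n ≤ m → nprod X s' i m = 0)
    (p : ℕ → ℕ)
    (hg : ∀ t ≤ T, ∀ m k, p t ≤ k → nprod (fun ℓ => X (s' + 1 + ℓ)) t m k = 0) :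
    ∀ t ≤ T, nprod X (s' + 1 + t) = nmul (nprod X s') (nprod (fun ℓ => X (s' + 1 + ℓ)) t) := by
  intro t
  induction t with
  | zero => intro _; rfl
  | succ t IH =>
    intro ht
    have : nprod X (s' + 1 + (t + 1)) = nmul (nprod X (s' + 1 + t)) (X (s' + 1 + (t + 1))) := rfl
    rw [this, IH (by omega), nmul_assoc hf (hg t (by omega))]
    rfl

/-- **Lemma.** For a chainable architecture of depth `L ≥ 2` and every split index
`1 ≤ s ≤ L-1`, one has `B^β ⊆ B^{β_s}`; consequently `E^β(A) ≥ E^{β_s}(A)` for every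
matrix `A` of the appropriate size. -/
theorem butterfly_subset_split (L : ℕ) (hL : 2 ≤ L) (π : ℕ → Pattern)
    (hPos : ∀ ℓ < L, (π ℓ).Pos)
    (hch : ∀ ℓ, ℓ + 1 < L → Pattern.Chainable (π ℓ) (π (ℓ + 1)))
    (A : ℕ → ℕ → ℂ) (hA : SuppIn (π 0).rows (π (L - 1)).cols A) :
    ∀ s, 1 ≤ s → s ≤ L - 1 →
      Bset π L ⊆ Bset (pairArch (pprod π 0 (s - 1)) (pprod π s (L - 1 - s))) 2 ∧
      Esplit π L s A ≤ Eerr π L A := by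
  intro s hs1 hs2
  have hs' : s - 1 + 1 = s := by omega
  have hsub : Bset π L ⊆ Bset (pairArch (pprod π 0 (s - 1)) (pprod π s (L - 1 - s))) 2 := by
    rintro M ⟨X, hXf, rfl⟩
    have hF0 : IsFactorN (pprod π 0 (s - 1)) (nprod X (s - 1)) := by
      apply nprod_factor π 0 (s - 1)
        (fun ℓ hℓ => hPos (0 + ℓ) (by omega))
        (fun ℓ hℓ => hch (0 + ℓ) (by omega))
        X (fun ℓ hℓ => by rw [Nat.zero_add]; exact hXf ℓ (by omega)) (s - 1) le_rfl
    have hF1 : ∀ t ≤ L - 1 - s, IsFactorN (pprod π s t) (nprod (fun m => X (s + m)) t) := by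
      intro t ht
      apply nprod_factor π s (L - 1 - s)
        (fun ℓ hℓ => hPos (s + ℓ) (by omega))
        (fun ℓ hℓ => hch (s + ℓ) (by omega))
        _ (fun ℓ hℓ => hXf (s + ℓ) (by omega)) t ht
    have hfun : (fun ℓ => X (s - 1 + 1 + ℓ)) = (fun m => X (s + m)) := by rw [hs']
    have hsplit := nprod_split X (s - 1) (L - 1 - s) (pprod π 0 (s - 1)).cols
      (fun i m hm => suppIn_col_zero (isFactorN_suppIn hF0) hm)
      (fun t => (pprod π s t).cols)
      (fun t ht m k hk => by
        rw [hfun]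
        exact suppIn_col_zero (isFactorN_suppIn (hF1 t ht)) hk)
      (L - 1 - s) le_rfl
    rw [hfun] at hsplit
    have hL1 : s - 1 + 1 + (L - 1 - s) = L - 1 := by omega
    rw [hL1] at hsplit
    refine ⟨fun ℓ => if ℓ = 0 then nprod X (s - 1) else nprod (fun m => X (s + m)) (L - 1 - s),
      ?_, ?_⟩
    · intro ℓ hℓ
      interval_cases ℓ
      · simpa [pairArch] using hF0
      · simpa [pairArch] using hF1 (L - 1 - s) le_rfl
    · show nprod X (L - 1) = nmul _ _
      exact hsplit
  refine ⟨hsub, ?_⟩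
  unfold Esplit Eerr
  apply csInf_le_csInf
  · refine ⟨0, ?_⟩
    rintro e ⟨B, -, rfl⟩
    exact Real.sqrt_nonneg _
  · refine ⟨nfrob (A - nprod (fun _ _ _ => 0) (L - 1)), ?_⟩
    exact ⟨_, ⟨fun _ _ _ => (0 : ℂ), fun ℓ _ i j _ => rfl, rfl⟩, rfl⟩
  · rintro e ⟨B, hB, rfl⟩
    exact ⟨B, hsub hB, rfl⟩
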